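/- Let X be a discrete random variable such that the set {x ∈ ℝ : P(X = x) = 0} is open, and suppose ∑_{n=1}^∞ P(|X_n − X| ≥ ε) < ∞ for every ε > 0. Then for every x with P(X = x) = 0 (continuity point of the CDF F of X), ∑_{n=1}^∞ |F_n(x) − F(x)| < ∞, where F_n is the CDF of X_n. -/

import Mathlib

open MeasureTheory

/-- If `X` is discrete, `{x : P(X = x) = 0}` is open, and `Xₙ → X` completely, then at every
continuity point `x` of the CDF `F` of `X`, `∑ₙ |Fₙ(x) − F(x)| < ∞`. -/
theorem stmt14 {Ω : Type*} [MeasurableSpace Ω] (P : Measure Ω) [IsProbabilityMeasure P]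
    (X : ℕ → Ω → ℝ) (X0 : Ω → ℝ)
    (hmeas : ∀ n, Measurable (X n)) (hmeas0 : Measurable X0)
    (hdisc : ∃ D : Set ℝ, D.Countable ∧ P {ω | X0 ω ∈ D} = 1)
    (hopen : IsOpen {x : ℝ | P {ω | X0 ω = x} = 0})
    (hcc : ∀ ε : ℝ, 0 < ε → Summable (fun n : ℕ => (P {ω | ε ≤ |X n ω - X0 ω|}).toReal)) :
    ∀ x : ℝ, P {ω | X0 ω = x} = 0 →
      Summable (fun n : ℕ =>
        |(P {ω | X n ω ≤ x}).toReal - (P {ω | X0 ω ≤ x}).toReal|) := by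
  intro x hx
  obtain ⟨D, hDc, hD1⟩ := hdisc
  -- null lemma
  have hnull : ∀ S : Set ℝ, (∀ y ∈ S, P {ω | X0 ω = y} = 0) → P {ω | X0 ω ∈ S} = 0 := by
    intro S hS
    have hcompl : P {ω | X0 ω ∈ D}ᶜ = 0 := by
      have hm : MeasurableSet {ω | X0 ω ∈ D} := hmeas0 hDc.measurableSet
      rw [measure_compl hm (measure_ne_top _ _), hD1, measure_univ, tsub_self]
    have hSD : P {ω | X0 ω ∈ S ∩ D} = 0 := by
      have : {ω | X0 ω ∈ S ∩ D} = ⋃ y ∈ S ∩ D, {ω | X0 ω = y} := by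
        ext ω; simp [Set.mem_iUnion]
      rw [this]
      exact (measure_biUnion_null_iff (hDc.mono Set.inter_subset_right)).2
        fun y hy => hS y hy.1
    have hsub : {ω | X0 ω ∈ S} ⊆ {ω | X0 ω ∈ S ∩ D} ∪ {ω | X0 ω ∈ D}ᶜ := by
      intro ω hω
      by_cases h : X0 ω ∈ D
      · exact Or.inl ⟨hω, h⟩
      · exact Or.inr h
    exact le_antisymm (le_trans (measure_mono hsub)
      (le_trans (measure_union_le _ _) (by rw [hSD, hcompl]; simp))) zero_le
  -- get δ
  obtain ⟨δ, hδ, hball⟩ := Metric.isOpen_iff.1 hopen x hx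
  have hball' : ∀ y : ℝ, |y - x| < δ → P {ω | X0 ω = y} = 0 := by
    intro y hy
    exact hball (by simpa [Real.dist_eq] using hy)
  -- null intervals
  have hN1 : P {ω | x < X0 ω ∧ X0 ω < x + δ} = 0 := by
    have := hnull {y | x < y ∧ y < x + δ} (fun y hy => hball' y (by
      rw [abs_sub_lt_iff]; constructor <;> linarith [hy.1, hy.2]))
    simpa using this
  have hN2 : P {ω | x - δ < X0 ω ∧ X0 ω ≤ x} = 0 := by
    have := hnull {y | x - δ < y ∧ y ≤ x} (fun y hy => hball' y (by
      rw [abs_sub_lt_iff]; constructor <;> linarith [hy.1, hy.2]))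
    simpa using this
  -- key bound
  have key : ∀ n, |(P {ω | X n ω ≤ x}).toReal - (P {ω | X0 ω ≤ x}).toReal|
      ≤ (P {ω | δ ≤ |X n ω - X0 ω|}).toReal := by
    intro n
    set A := {ω | X n ω ≤ x}
    set B := {ω | X0 ω ≤ x}
    set E := {ω | δ ≤ |X n ω - X0 ω|}
    have h1 : P A ≤ P B + P E := by
      have hsub : A ⊆ B ∪ (E ∪ {ω | x < X0 ω ∧ X0 ω < x + δ}) := by
        intro ω hω
        by_cases hB : X0 ω ≤ x
        · exact Or.inl hB
        · push_neg at hB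
          by_cases hE : δ ≤ |X n ω - X0 ω|
          · exact Or.inr (Or.inl hE)
          · push_neg at hE
            refine Or.inr (Or.inr ⟨hB, ?_⟩)
            have := abs_lt.1 hE
            have hA : X n ω ≤ x := hω
            linarith [this.1, this.2]
      calc P A ≤ P B + (P E + P {ω | x < X0 ω ∧ X0 ω < x + δ}) :=
            le_trans (measure_mono hsub) (le_trans (measure_union_le _ _)
              (add_le_add le_rfl (measure_union_le _ _)))
        _ = P B + P E := by rw [hN1, add_zero]
    have h2 : P B ≤ P A + P E := by
      have hsub : B ⊆ A ∪ (E ∪ {ω | x - δ < X0 ω ∧ X0 ω ≤ x}) := by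
        intro ω hω
        by_cases hA : X n ω ≤ x
        · exact Or.inl hA
        · push_neg at hA
          by_cases hE : δ ≤ |X n ω - X0 ω|
          · exact Or.inr (Or.inl hE)
          · push_neg at hE
            have := abs_lt.1 hE
            have hB : X0 ω ≤ x := hω
            exact Or.inr (Or.inr ⟨by linarith [this.1, this.2], hB⟩)
      calc P B ≤ P A + (P E + P {ω | x - δ < X0 ω ∧ X0 ω ≤ x}) :=
            le_trans (measure_mono hsub) (le_trans (measure_union_le _ _)
              (add_le_add le_rfl (measure_union_le _ _)))
        _ = P A + P E := by rw [hN2, add_zero]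
    rw [abs_sub_le_iff]
    constructor
    · have := ENNReal.toReal_mono (by finiteness) h1
      rw [ENNReal.toReal_add (measure_ne_top _ _) (measure_ne_top _ _)] at this
      linarith
    · have := ENNReal.toReal_mono (by finiteness) h2
      rw [ENNReal.toReal_add (measure_ne_top _ _) (measure_ne_top _ _)] at this
      linarith
  exact Summable.of_nonneg_of_le (fun n => abs_nonneg _) key (hcc δ hδ)
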